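/- Let F : D → D be the functor F X = {×, ✓} × X on Set, and let a : F({0,1}) → {0,1} be the algebra defined by a(✓, s) = 1 − s and a(×, s) = s. The relatively terminal coalgebra ν(a) has carrier the set of streams (u₁,s₁)(u₂,s₂)… ∈ ({×,✓} × {0,1})^ω such that for all i: uᵢ = × implies sᵢ = sᵢ₊₁, and uᵢ = ✓ implies sᵢ = 1 − sᵢ₊₁; equivalently, this set, with coalgebra structure given by head-tail and the projection to the first pair's symbol, is terminal relative to a. -/
import Mathlib


/-- The symbol `✓` is encoded as `true` and `×` as `false`. The algebra
`a : {×,✓} × {0,1} → {0,1}` with `a(✓, s) = 1 - s` and `a(×, s) = s`, with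
`{0,1}` encoded as `Bool`. -/
def aAlg : Bool × Bool → Bool :=
  fun p => if p.1 then !p.2 else p.2

/-- The carrier of `ν(a)`: streams over `{×,✓} × {0,1}` that follow the
action of `a` when read from right to left. -/
def NuCarrier : Type :=
  {σ : ℕ → Bool × Bool // ∀ i, (σ i).2 = aAlg ((σ i).1, (σ (i + 1)).2)}

/-- Iterated state transition. -/
def cIter {B : Type} (c : B → Bool × B) (x : B) : ℕ → B
  | 0 => x
  | n + 1 => cIter c (c x).2 n

/-- The set of streams following the algebra `aAlg`, with coalgebra structure
`σ ↦ (u₁, tail σ)` and universal ca-morphism `σ ↦ s₁`, is terminal relative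
to `aAlg`: for any coalgebra `c : B → {×,✓} × B`, (i) composing a coalgebra
morphism into `NuCarrier` with the universal map `σ ↦ s₁` yields a
ca-morphism to `aAlg`, and (ii) every ca-morphism to `aAlg` arises this way
from a unique coalgebra morphism. -/
theorem nu_of_flip_algebra_is_relatively_terminal :
    ∀ (B : Type) (c : B → Bool × B),
      (∀ g : B → NuCarrier,
        (∀ x, ((g x).1 0).1 = (c x).1 ∧ ∀ i, (g x).1 (i + 1) = (g (c x).2).1 i) →
          ∀ x, ((g x).1 0).2 = aAlg ((c x).1, ((g (c x).2).1 0).2)) ∧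
      (∀ f : B → Bool, (∀ x, f x = aAlg ((c x).1, f (c x).2)) →
        ∃! g : B → NuCarrier,
          (∀ x, ((g x).1 0).1 = (c x).1 ∧ ∀ i, (g x).1 (i + 1) = (g (c x).2).1 i)
            ∧ ∀ x, ((g x).1 0).2 = f x) := by
  intro B c
  constructor
  · intro g hg x
    have h := (g x).2 0
    rw [h, (hg x).1, ((hg x).2 0)]
  · intro f hf
    have hiter : ∀ x i, cIter c x (i + 1) = cIter c (c x).2 i := fun x i => rfl
    refine ⟨fun x => ⟨fun i => ((c (cIter c x i)).1, f (cIter c x i)), ?_⟩, ⟨?_, ?_⟩, ?_⟩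
    · intro i
      have key : ∀ y j, cIter c y (j + 1) = (c (cIter c y j)).2 := by
        intro y j
        induction j generalizing y with
        | zero => rfl
        | succ n ih => exact ih (c y).2
      show f (cIter c x i) = aAlg ((c (cIter c x i)).1, f (cIter c x (i+1)))
      rw [key]
      exact hf (cIter c x i)
    · intro x
      exact ⟨rfl, fun i => rfl⟩
    · intro x; rfl
    · intro g' ⟨hmor, hf'⟩
      funext x
      apply Subtype.ext
      funext i
      induction i generalizing x with
      | zero =>
        have h1 := (hmor x).1
        have h2 := hf' x
        exact Prod.ext h1 h2
      | succ n ih =>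
        have := (hmor x).2 n
        rw [this, ih]
        rfl
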